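/- arXiv:1804.10818 — 6 statements merged into one kernel-verified Lean document; each statement's English description precedes it below -/
import Mathlib

section
/- Let G be an undirected graph on N vertices, S a set of l pinned vertices, and for each unpinned vertex p_j (j = 1,...,N−l) let w_{p_j} be the number of vertices in S adjacent to p_j. Then the smallest eigenvalue of the grounded Laplacian satisfies λ_1(L(S|S)) ≤ (w_{p_1} + w_{p_2} + ... + w_{p_{N−l}})/(N−l). -/
open Matrix

/-- The smallest eigenvalue of a matrix, via its real spectrum. -/
noncomputable def minEig {n : Type*} [Fintype n] [DecidableEq n]
    (M : Matrix n n ℝ) : ℝ := sInf (spectrum ℝ M)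

/-- The grounded Laplacian: the principal submatrix obtained by deleting the rows and
columns indexed by `S`. -/
def grounded {N : ℕ} (L : Matrix (Fin N) (Fin N) ℝ) (S : Finset (Fin N)) :
    Matrix {v : Fin N // v ∉ S} {v : Fin N // v ∉ S} ℝ :=
  L.submatrix (fun p => p.1) (fun p => p.1)

-- Rayleigh bound: minEig A * (x ⬝ᵥ x) ≤ x ⬝ᵥ (A *ᵥ x) for real symmetric A
lemma minEig_le_eigenvalue {n : Type*} [Fintype n] [DecidableEq n]
    {A : Matrix n n ℝ} (hA : A.IsHermitian) (i : n) :
    minEig A ≤ hA.eigenvalues i := by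
  refine csInf_le (A.finite_spectrum.bddBelow) ?_
  exact hA.eigenvalues_mem_spectrum_real i

lemma rayleigh_bound {n : Type*} [Fintype n] [DecidableEq n] [Nonempty n]
    {A : Matrix n n ℝ} (hA : A.IsHermitian) (x : n → ℝ) :
    minEig A * (x ⬝ᵥ x) ≤ x ⬝ᵥ (A *ᵥ x) := by
  set c := minEig A with hc
  have hpsd : (A - c • 1).PosSemidef := by
    have hU := hA.spectral_theorem
    have key : A - c • 1 = (hA.eigenvectorUnitary : Matrix n n ℝ) *
        Matrix.diagonal (fun i => hA.eigenvalues i - c) *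
        (star (hA.eigenvectorUnitary : Matrix n n ℝ)) := by
      have hUU : (hA.eigenvectorUnitary : Matrix n n ℝ) *
          (star (hA.eigenvectorUnitary : Matrix n n ℝ)) = 1 :=
        (Matrix.mem_unitaryGroup_iff).mp hA.eigenvectorUnitary.2
      have : Matrix.diagonal (fun i => hA.eigenvalues i - c) =
          Matrix.diagonal (RCLike.ofReal ∘ hA.eigenvalues) - c • 1 := by
        ext i j
        by_cases h : i = j <;> simp [h, Matrix.one_apply, Matrix.diagonal]
      rw [this, Matrix.mul_sub, Matrix.sub_mul, ← Unitary.conjStarAlgAut_apply (S := ℝ), ← hU]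
      congr 1
      rw [Matrix.mul_smul, Matrix.smul_mul, Matrix.mul_one, hUU]
    rw [key]
    refine Matrix.PosSemidef.mul_mul_conjTranspose_same ?_ _
    refine Matrix.posSemidef_diagonal_iff.mpr fun i => ?_
    simp [sub_nonneg, hc, minEig_le_eigenvalue hA i]
  have h0 := hpsd.dotProduct_mulVec_nonneg x
  have : star x ⬝ᵥ ((A - c • 1) *ᵥ x) = x ⬝ᵥ (A *ᵥ x) - c * (x ⬝ᵥ x) := by
    simp [Matrix.sub_mulVec, Matrix.smul_mulVec, dotProduct_sub,
      dotProduct_smul, smul_eq_mul]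
  rw [this] at h0
  linarith

theorem stmt7 {N : ℕ} (G : SimpleGraph (Fin N)) [DecidableRel G.Adj]
    (S : Finset (Fin N)) (hS : S ≠ Finset.univ) :
    minEig (grounded (G.lapMatrix ℝ) S) ≤
      (∑ v ∈ Sᶜ, ((S.filter (fun s => G.Adj v s)).card : ℝ)) / (Sᶜ.card : ℝ) := by
  obtain ⟨v0, hv0⟩ : ∃ v, v ∉ S := by
    by_contra h
    push_neg at h
    exact hS (Finset.eq_univ_iff_forall.mpr h)
  haveI : Nonempty {v : Fin N // v ∉ S} := ⟨⟨v0, hv0⟩⟩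
  set A := grounded (G.lapMatrix ℝ) S with hAdef
  have hA : A.IsHermitian := by
    ext p q
    simp [hAdef, grounded, Matrix.conjTranspose_apply]
    exact congrFun (congrFun (SimpleGraph.isSymm_lapMatrix (R := ℝ) (G := G)) p.1) q.1
  have hray := rayleigh_bound hA (fun _ => 1)
  -- compute x ⬝ᵥ x
  have hcard : ((fun (_ : {v : Fin N // v ∉ S}) => (1:ℝ)) ⬝ᵥ (fun _ => 1)) = (Sᶜ.card : ℝ) := by
    simp [dotProduct, Finset.card_compl]
  -- row sums
  have hrow : ∀ p : {v : Fin N // v ∉ S},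
      ∑ q : {v : Fin N // v ∉ S}, A p q = ((S.filter (fun s => G.Adj p.1 s)).card : ℝ) := by
    intro p
    have htot : ∑ q : Fin N, G.lapMatrix ℝ p.1 q = 0 := by
      have := congrFun (G.lapMatrix_mulVec_const_eq_zero (R := ℝ)) p.1
      simpa [Matrix.mulVec, dotProduct] using this
    have hsplit : ∑ q : Fin N, G.lapMatrix ℝ p.1 q =
        (∑ q ∈ Sᶜ, G.lapMatrix ℝ p.1 q) + ∑ q ∈ S, G.lapMatrix ℝ p.1 q := by
      rw [add_comm, Finset.sum_add_sum_compl]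
    have hsub : ∑ q : {v : Fin N // v ∉ S}, A p q = ∑ q ∈ Sᶜ, G.lapMatrix ℝ p.1 q := by
      rw [Finset.sum_subtype Sᶜ (fun x => Finset.mem_compl) (fun q => G.lapMatrix ℝ p.1 q)]
      rfl
    have hSsum : ∑ q ∈ S, G.lapMatrix ℝ p.1 q =
        -((S.filter (fun s => G.Adj p.1 s)).card : ℝ) := by
      have : ∀ q ∈ S, G.lapMatrix ℝ p.1 q = -(if G.Adj p.1 q then (1:ℝ) else 0) := by
        intro q hq
        have hne : p.1 ≠ q := fun h => p.2 (h ▸ hq)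
        simp [SimpleGraph.lapMatrix, SimpleGraph.degMatrix, SimpleGraph.adjMatrix, hne]
      rw [Finset.sum_congr rfl this, Finset.sum_neg_distrib]
      congr 1
      simp [Finset.sum_boole]
    have := hsub
    rw [this]
    have := hsplit
    rw [htot] at this
    linarith [hSsum, this]
  have hQ : ((fun (_ : {v : Fin N // v ∉ S}) => (1:ℝ)) ⬝ᵥ (A *ᵥ (fun _ => 1))) =
      ∑ v ∈ Sᶜ, ((S.filter (fun s => G.Adj v s)).card : ℝ) := by
    simp only [dotProduct, Matrix.mulVec, one_mul, mul_one]
    rw [Finset.sum_congr rfl (fun p _ => hrow p)]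
    rw [Finset.sum_subtype Sᶜ (fun x => Finset.mem_compl)
      (fun v => ((S.filter (fun s => G.Adj v s)).card : ℝ))]
  have hpos : (0:ℝ) < (Sᶜ.card : ℝ) := by
    have : v0 ∈ Sᶜ := Finset.mem_compl.mpr hv0
    have : 0 < Sᶜ.card := Finset.card_pos.mpr ⟨v0, this⟩
    exact_mod_cast this
  rw [hcard, hQ] at hray
  rw [le_div_iff₀ hpos]
  exact hray
end

section
/- Let G be an undirected graph on N vertices with Laplacian L, and let i be a single pinned vertex of degree k_i. Then λ_1(L(i|i)) ≤ k_i/(N−1) ≤ 1. -/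
open Matrix

lemma rayleigh_aux {n : Type*} [Fintype n] [DecidableEq n] [Nonempty n]
    {M : Matrix n n ℝ} (hM : M.IsHermitian) (x : n → ℝ) (hx : x ≠ 0) :
    ∃ j, hM.eigenvalues j * (x ⬝ᵥ x) ≤ x ⬝ᵥ (M *ᵥ x) := by
  set U : Matrix n n ℝ := (hM.eigenvectorUnitary : Matrix n n ℝ) with hU
  have hUU : U * star U = 1 := (Matrix.mem_unitaryGroup_iff).mp (hM.eigenvectorUnitary).2
  have hstar : star U = Uᵀ := by
    rw [Matrix.star_eq_conjTranspose, conjTranspose_eq_transpose_of_trivial]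
  set y : n → ℝ := Uᵀ *ᵥ x with hy
  have hxy : U *ᵥ y = x := by
    rw [hy, mulVec_mulVec, ← hstar, hUU, one_mulVec]
  have hyne : y ≠ 0 := by
    intro h
    exact hx (by rw [← hxy, h, mulVec_zero])
  have h1 : x ⬝ᵥ (M *ᵥ x) = ∑ j, hM.eigenvalues j * (y j)^2 := by
    conv_lhs => rw [hM.spectral_theorem, Unitary.conjStarAlgAut_apply]
    rw [← hU, hstar, ← mulVec_mulVec, ← mulVec_mulVec, dotProduct_mulVec (A := U),
      ← mulVec_transpose]
    simp only [dotProduct, mulVec_diagonal, hy]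
    exact Finset.sum_congr rfl fun k _ => by simp [RCLike.ofReal_real_eq_id]; ring
  have h2 : x ⬝ᵥ x = ∑ j, (y j)^2 := by
    have : y ⬝ᵥ y = x ⬝ᵥ x := by
      conv_lhs => rw [hy, dotProduct_mulVec, vecMul_transpose, hxy]
    rw [← this]
    simp [dotProduct, sq]
  by_contra hcon
  push_neg at hcon
  obtain ⟨j0, hj0⟩ := Function.ne_iff.mp hyne
  have hxx : 0 < x ⬝ᵥ x := by
    rw [h2]
    apply Finset.sum_pos'
    · intro k _; positivity
    · have hj0' : y j0 ≠ 0 := by simpa using hj0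
      exact ⟨j0, Finset.mem_univ _, by positivity⟩
  set c : ℝ := x ⬝ᵥ (M *ᵥ x) / (x ⬝ᵥ x) with hc
  have hlt : ∀ j, c < hM.eigenvalues j := by
    intro j
    rw [hc, div_lt_iff₀ hxx]
    exact hcon j
  have : x ⬝ᵥ (M *ᵥ x) < x ⬝ᵥ (M *ᵥ x) := by
    calc x ⬝ᵥ (M *ᵥ x) = c * (x ⬝ᵥ x) := by rw [hc, div_mul_cancel₀ _ (ne_of_gt hxx)]
    _ = ∑ j, c * (y j)^2 := by rw [h2, Finset.mul_sum]
    _ < ∑ j, hM.eigenvalues j * (y j)^2 := by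
        apply Finset.sum_lt_sum
        · intro k _
          exact mul_le_mul_of_nonneg_right (hlt k).le (by positivity)
        · exact ⟨j0, Finset.mem_univ _, by
            apply mul_lt_mul_of_pos_right (hlt j0)
            have : y j0 ≠ 0 := by simpa using hj0
            positivity⟩
    _ = x ⬝ᵥ (M *ᵥ x) := h1.symm
  exact absurd this (lt_irrefl _)

theorem stmt9 {N : ℕ} (hN : 2 ≤ N) (G : SimpleGraph (Fin N)) [DecidableRel G.Adj]
    (i : Fin N) :
    minEig (grounded (G.lapMatrix ℝ) {i}) ≤ (G.degree i : ℝ) / ((N : ℝ) - 1) ∧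
      (G.degree i : ℝ) / ((N : ℝ) - 1) ≤ 1 := by
  have hN1 : (0:ℝ) < (N:ℝ) - 1 := by
    have : (2:ℝ) ≤ (N:ℝ) := by exact_mod_cast hN
    linarith
  have hdeg : (G.degree i : ℝ) ≤ (N:ℝ) - 1 := by
    have := G.degree_lt_card_verts i
    rw [Fintype.card_fin] at this
    have : (G.degree i : ℝ) + 1 ≤ (N:ℝ) := by exact_mod_cast this
    linarith
  constructor
  · set L := G.lapMatrix ℝ with hL
    set M := grounded L ({i} : Finset (Fin N)) with hMdef
    have hLH : L.IsHermitian := by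
      rw [Matrix.IsHermitian, conjTranspose_eq_transpose_of_trivial]
      exact G.isSymm_lapMatrix (R := ℝ)
    have hherm : M.IsHermitian := hLH.submatrix _
    obtain ⟨j0, hj0⟩ : ∃ j : Fin N, j ≠ i := by
      obtain ⟨j, hj⟩ := Fintype.exists_ne_of_one_lt_card (by rw [Fintype.card_fin]; omega) i
      exact ⟨j, hj⟩
    haveI : Nonempty {v : Fin N // v ∉ ({i} : Finset (Fin N))} :=
      ⟨⟨j0, by simpa using hj0⟩⟩
    set x : {v : Fin N // v ∉ ({i} : Finset (Fin N))} → ℝ := fun _ => 1 with hxdef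
    have hx : x ≠ 0 := by
      intro h
      have := congrFun h (Classical.arbitrary _)
      simp [hxdef] at this
    have key : ∀ f : Fin N → ℝ,
        ∑ p : {v : Fin N // v ∉ ({i} : Finset (Fin N))}, f p.1 = (∑ k, f k) - f i := by
      intro f
      rw [← Finset.sum_subtype (Finset.univ \ {i}) (fun v => by simp) f,
        Finset.sum_sdiff_eq_sub (Finset.subset_univ _), Finset.sum_singleton]
    have hrow : ∀ v : Fin N, ∑ k, L v k = 0 := by
      intro v
      have := congrFun (G.lapMatrix_mulVec_const_eq_zero (R := ℝ)) v
      simpa [mulVec, dotProduct] using this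
    have hxx : x ⬝ᵥ x = (N:ℝ) - 1 := by
      have h0 : x ⬝ᵥ x = ∑ p : {v : Fin N // v ∉ ({i} : Finset (Fin N))}, (fun _ : Fin N => (1:ℝ)) p.1 := by
        simp [dotProduct, hxdef]
      rw [h0]
      refine (key (fun _ : Fin N => (1:ℝ))).trans ?_
      simp
    have hxMx : x ⬝ᵥ (M *ᵥ x) = (G.degree i : ℝ) := by
      have h1 : x ⬝ᵥ (M *ᵥ x)
          = ∑ p : {v : Fin N // v ∉ ({i} : Finset (Fin N))}, (fun v : Fin N => -(L v i)) p.1 := by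
        simp only [dotProduct, mulVec, hxdef, one_mul, mul_one]
        refine Finset.sum_congr rfl fun p _ => ?_
        have : ∑ q : {v : Fin N // v ∉ ({i} : Finset (Fin N))},
            (fun k : Fin N => L p.1 k) q.1 = (∑ k, L p.1 k) - L p.1 i := key _
        rw [hrow] at this
        simpa [hMdef, grounded, dotProduct] using this
      rw [h1]
      refine (key (fun v : Fin N => -(L v i))).trans ?_
      have hcol : ∑ k, L k i = 0 := by
        rw [← hrow i]
        exact Finset.sum_congr rfl fun k _ => (G.isSymm_lapMatrix (R := ℝ)).apply i k
      have hLii : L i i = (G.degree i : ℝ) := by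
        simp [hL, SimpleGraph.lapMatrix, SimpleGraph.degMatrix]
      have : ∑ k, -L k i = -∑ k, L k i := by rw [Finset.sum_neg_distrib]
      rw [this, hcol, hLii]
      ring
    obtain ⟨j, hj⟩ := rayleigh_aux hherm x hx
    rw [hxx, hxMx] at hj
    have h1 : hherm.eigenvalues j ≤ (G.degree i : ℝ) / ((N:ℝ) - 1) :=
      (le_div_iff₀ hN1).mpr hj
    refine le_trans ?_ h1
    exact csInf_le (Matrix.finite_spectrum M).bddBelow (hherm.eigenvalues_mem_spectrum_real j)
  · rw [div_le_one hN1]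
    exact hdeg
end

section
/- Let G be an undirected graph on N vertices with Laplacian L, and let i be a vertex. Then λ_1(L(i|i)) = 1 if and only if vertex i is adjacent to all other N−1 vertices. -/
open Matrix

namespace Stmt10Aux

variable {N : ℕ}

/-- Extend a vector on the complement of `i` by zero. -/
noncomputable def extFun (i : Fin N) (x : {v : Fin N // v ∉ ({i} : Finset (Fin N))} → ℝ) :
    Fin N → ℝ :=
  fun u => if h : u ∉ ({i} : Finset (Fin N)) then x ⟨u, h⟩ else 0

lemma extFun_self (i : Fin N) (x : {v : Fin N // v ∉ ({i} : Finset (Fin N))} → ℝ) :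
    extFun i x i = 0 := dif_neg (by simp)

lemma extFun_val (i : Fin N) (x : {v : Fin N // v ∉ ({i} : Finset (Fin N))} → ℝ)
    (p : {v : Fin N // v ∉ ({i} : Finset (Fin N))}) : extFun i x p.1 = x p := by
  rw [extFun, dif_pos p.2]

lemma sum_split (i : Fin N) (f : Fin N → ℝ) :
    ∑ u, f u = (∑ p : {v : Fin N // v ∉ ({i} : Finset (Fin N))}, f p.1) + f i := by
  rw [← Finset.sum_compl_add_sum ({i} : Finset (Fin N)) f]
  congr 1
  · exact Finset.sum_subtype ({i}ᶜ : Finset (Fin N)) (fun x => Finset.mem_compl) f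
  · simp

lemma sum_split₀ (i : Fin N) (f : Fin N → ℝ) (hf : f i = 0) :
    ∑ u, f u = ∑ p : {v : Fin N // v ∉ ({i} : Finset (Fin N))}, f p.1 := by
  rw [sum_split i f, hf, add_zero]

lemma quad_transfer (L : Matrix (Fin N) (Fin N) ℝ) (i : Fin N)
    (x : {v : Fin N // v ∉ ({i} : Finset (Fin N))} → ℝ) :
    x ⬝ᵥ (grounded L {i} *ᵥ x) = (extFun i x) ⬝ᵥ (L *ᵥ extFun i x) := by
  simp only [dotProduct, mulVec, grounded, submatrix_apply]
  rw [sum_split₀ i _ (by rw [extFun_self]; ring)]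
  refine Finset.sum_congr rfl fun p _ => ?_
  rw [extFun_val]
  congr 1
  rw [sum_split₀ i _ (by rw [extFun_self]; ring)]
  exact Finset.sum_congr rfl fun q _ => by rw [extFun_val]

lemma mem_spectrum_of_eig {n : Type*} [Fintype n] [DecidableEq n] {M : Matrix n n ℝ}
    {μ : ℝ} {x : n → ℝ} (hx : x ≠ 0) (h : M *ᵥ x = μ • x) : μ ∈ spectrum ℝ M := by
  rw [spectrum.mem_iff]
  intro hunit
  have hdet : IsUnit (algebraMap ℝ (Matrix n n ℝ) μ - M).det :=
    (isUnit_iff_isUnit_det _).mp hunit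
  have h0 : (algebraMap ℝ (Matrix n n ℝ) μ - M) *ᵥ x = 0 := by
    rw [sub_mulVec, Algebra.algebraMap_eq_smul_one, smul_mulVec, one_mulVec, h, sub_self]
  have : (algebraMap ℝ (Matrix n n ℝ) μ - M).det = 0 :=
    (Matrix.exists_mulVec_eq_zero_iff).mp ⟨x, hx, h0⟩
  rw [this] at hdet
  exact (isUnit_iff_ne_zero.mp hdet) rfl

lemma exists_eig_of_mem_spectrum {n : Type*} [Fintype n] [DecidableEq n] {M : Matrix n n ℝ}
    {μ : ℝ} (h : μ ∈ spectrum ℝ M) : ∃ x : n → ℝ, x ≠ 0 ∧ M *ᵥ x = μ • x := by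
  rw [spectrum.mem_iff] at h
  have hdet : (algebraMap ℝ (Matrix n n ℝ) μ - M).det = 0 := by
    by_contra hd
    exact h ((isUnit_iff_isUnit_det _).mpr (isUnit_iff_ne_zero.mpr hd))
  obtain ⟨x, hx, h0⟩ := (Matrix.exists_mulVec_eq_zero_iff).mpr hdet
  refine ⟨x, hx, ?_⟩
  rw [sub_mulVec, Algebra.algebraMap_eq_smul_one, smul_mulVec, one_mulVec,
    sub_eq_zero] at h0
  exact h0.symm

variable (G : SimpleGraph (Fin N)) [DecidableRel G.Adj] (i : Fin N)

lemma lap_offdiag {p q : Fin N} (h : p ≠ q) :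
    (G.lapMatrix ℝ) p q = -(if G.Adj p q then 1 else 0) := by
  simp [SimpleGraph.lapMatrix, SimpleGraph.degMatrix, Matrix.diagonal_apply_ne _ h]

lemma grounded_isHermitian : (grounded (G.lapMatrix ℝ) {i}).IsHermitian := by
  have hs := G.isSymm_lapMatrix (R := ℝ)
  ext p q
  simp only [conjTranspose_apply, grounded, submatrix_apply, RCLike.star_def, starRingEnd_apply,
    star_trivial]
  exact congrFun (congrFun hs p.1) q.1

lemma grounded_mulVec_one :
    grounded (G.lapMatrix ℝ) {i} *ᵥ (fun _ => (1 : ℝ)) =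
      fun p => if G.Adj p.1 i then 1 else 0 := by
  funext p
  have hp : (p.1 : Fin N) ≠ i := by simpa using p.2
  have h0 : ∑ v : Fin N, (G.lapMatrix ℝ) p.1 v = 0 := by
    have := congrFun (G.lapMatrix_mulVec_const_eq_zero (R := ℝ)) p.1
    simpa [mulVec, dotProduct] using this
  have hLHS : (grounded (G.lapMatrix ℝ) {i} *ᵥ (fun _ => (1 : ℝ))) p =
      ∑ q : {v : Fin N // v ∉ ({i} : Finset (Fin N))}, (G.lapMatrix ℝ) p.1 q.1 := by
    simp [mulVec, dotProduct, grounded]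
  rw [hLHS]
  rw [sum_split i (fun v => (G.lapMatrix ℝ) p.1 v)] at h0
  have := lap_offdiag G (p := p.1) (q := i) hp
  linarith [h0, this]

lemma quad_lower (x : {v : Fin N // v ∉ ({i} : Finset (Fin N))} → ℝ) :
    (∑ p : {v : Fin N // v ∉ ({i} : Finset (Fin N))}, if G.Adj i p.1 then (x p)^2 else 0)
      ≤ x ⬝ᵥ (grounded (G.lapMatrix ℝ) {i} *ᵥ x) := by
  rw [quad_transfer]
  set e := extFun i x with he
  rw [← Matrix.toLinearMap₂'_apply', SimpleGraph.lapMatrix_toLinearMap₂']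
  rw [le_div_iff₀ (by norm_num : (0:ℝ) < 2)]
  set t : Fin N → Fin N → ℝ := fun u v => if G.Adj u v then (e u - e v)^2 else 0 with ht
  have htn : ∀ u v, 0 ≤ t u v := by
    intro u v; rw [ht]; dsimp only; split <;> positivity
  have hterm : ∀ p : {v : Fin N // v ∉ ({i} : Finset (Fin N))},
      t i p.1 = (if G.Adj i p.1 then (x p)^2 else 0) := by
    intro p
    rw [ht]; dsimp only
    rw [he, extFun_self, extFun_val, zero_sub, neg_sq]
  have hterm' : ∀ p : {v : Fin N // v ∉ ({i} : Finset (Fin N))},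
      t p.1 i = (if G.Adj i p.1 then (x p)^2 else 0) := by
    intro p
    rw [ht]; dsimp only
    rw [he, extFun_self, extFun_val, sub_zero, if_congr (G.adj_comm p.1 i) rfl rfl]
  rw [sum_split i (fun u => ∑ v, t u v)]
  have hrow : ∑ v, t i v =
      ∑ p : {v : Fin N // v ∉ ({i} : Finset (Fin N))}, (if G.Adj i p.1 then (x p)^2 else 0) := by
    rw [sum_split₀ i _ (by simp [ht])]
    exact Finset.sum_congr rfl fun q _ => hterm q
  have hcol : (∑ p : {v : Fin N // v ∉ ({i} : Finset (Fin N))},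
        if G.Adj i p.1 then (x p)^2 else 0)
      ≤ ∑ p : {v : Fin N // v ∉ ({i} : Finset (Fin N))}, ∑ v, t p.1 v := by
    refine Finset.sum_le_sum fun p _ => ?_
    rw [← hterm' p]
    exact Finset.single_le_sum (f := fun v => t p.1 v) (fun v _ => htn _ _) (Finset.mem_univ i)
  linarith

end Stmt10Aux

open Stmt10Aux
theorem stmt10 {N : ℕ} (hN : 2 ≤ N) (G : SimpleGraph (Fin N)) [DecidableRel G.Adj]
    (i : Fin N) :
    minEig (grounded (G.lapMatrix ℝ) {i}) = 1 ↔ ∀ v : Fin N, v ≠ i → G.Adj i v := by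
  have hnt : Nontrivial (Fin N) := by
    rw [← Fintype.one_lt_card_iff_nontrivial, Fintype.card_fin]; omega
  have hne : Nonempty {v : Fin N // v ∉ ({i} : Finset (Fin N))} := by
    obtain ⟨v, hv⟩ := exists_ne i
    exact ⟨⟨v, by simp [hv]⟩⟩
  have hones0 : (fun _ => (1:ℝ)) ≠ (0 : {v : Fin N // v ∉ ({i} : Finset (Fin N))} → ℝ) := by
    intro hz
    have := congrFun hz (Classical.arbitrary _)
    norm_num at this
  have bdd : BddBelow (spectrum ℝ (grounded (G.lapMatrix ℝ) {i})) :=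
    (Matrix.finite_real_spectrum (A := grounded (G.lapMatrix ℝ) {i})).bddBelow
  rw [minEig]
  constructor
  · intro h v hv
    by_contra hadj
    have hK : (grounded (G.lapMatrix ℝ) {i} - 1).IsHermitian :=
      (grounded_isHermitian G i).sub isHermitian_one
    have hKpsd : (grounded (G.lapMatrix ℝ) {i} - 1).PosSemidef := by
      apply hK.posSemidef_iff_eigenvalues_nonneg.mpr
      intro j
      have hw := hK.mulVec_eigenvectorBasis j
      set w : {v : Fin N // v ∉ ({i} : Finset (Fin N))} → ℝ := ⇑(hK.eigenvectorBasis j) with hwdef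
      have hw0 : w ≠ 0 := by
        intro hz
        have hb := hK.eigenvectorBasis.toBasis.ne_zero j
        rw [OrthonormalBasis.coe_toBasis] at hb
        exact hb (by ext u; exact congrFun hz u)
      have hMw : grounded (G.lapMatrix ℝ) {i} *ᵥ w = (hK.eigenvalues j + 1) • w := by
        have hsplit : grounded (G.lapMatrix ℝ) {i} = (grounded (G.lapMatrix ℝ) {i} - 1) + 1 := by
          abel
        conv_lhs => rw [hsplit]
        rw [add_mulVec, one_mulVec, hw, add_smul, one_smul]
      have hmem := mem_spectrum_of_eig hw0 hMw
      have hle := csInf_le bdd hmem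
      rw [h] at hle
      exact (by linarith : (0:ℝ) ≤ hK.eigenvalues j)
    have h2 := hKpsd.dotProduct_mulVec_nonneg (fun _ => (1:ℝ))
    rw [star_trivial, sub_mulVec, one_mulVec, dotProduct_sub, grounded_mulVec_one G i] at h2
    have hlt : (fun _ => (1:ℝ)) ⬝ᵥ (fun p : {v : Fin N // v ∉ ({i} : Finset (Fin N))} =>
          if G.Adj p.1 i then (1:ℝ) else 0)
        < (fun _ => (1:ℝ)) ⬝ᵥ (fun _ : {v : Fin N // v ∉ ({i} : Finset (Fin N))} => (1:ℝ)) := by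
      simp only [dotProduct, one_mul]
      refine Finset.sum_lt_sum (fun p _ => by split <;> norm_num)
        ⟨⟨v, by simp [hv]⟩, Finset.mem_univ _, ?_⟩
      rw [if_neg (fun ha => hadj ((G.adj_comm v i).mp ha))]
      norm_num
    linarith
  · intro h
    have hall : ∀ p : {v : Fin N // v ∉ ({i} : Finset (Fin N))}, G.Adj i p.1 :=
      fun p => h p.1 (by simpa using p.2)
    have hone : grounded (G.lapMatrix ℝ) {i} *ᵥ (fun _ => (1:ℝ)) = fun _ => (1:ℝ) := by
      rw [grounded_mulVec_one G i]
      funext p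
      rw [if_pos ((G.adj_comm i p.1).mp (hall p))]
    have h1mem : (1:ℝ) ∈ spectrum ℝ (grounded (G.lapMatrix ℝ) {i}) :=
      mem_spectrum_of_eig hones0 (by rw [hone]; funext p; simp)
    have hlb : ∀ μ ∈ spectrum ℝ (grounded (G.lapMatrix ℝ) {i}), (1:ℝ) ≤ μ := by
      intro μ hμ
      obtain ⟨x, hx0, hx⟩ := exists_eig_of_mem_spectrum hμ
      have hq : x ⬝ᵥ (grounded (G.lapMatrix ℝ) {i} *ᵥ x) = μ * (x ⬝ᵥ x) := by
        rw [hx, dotProduct_smul, smul_eq_mul]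
      have hge : x ⬝ᵥ x ≤ x ⬝ᵥ (grounded (G.lapMatrix ℝ) {i} *ᵥ x) := by
        calc x ⬝ᵥ x = ∑ p : {v : Fin N // v ∉ ({i} : Finset (Fin N))},
              if G.Adj i p.1 then (x p)^2 else 0 := by
              simp only [dotProduct]
              exact Finset.sum_congr rfl fun p _ => by rw [if_pos (hall p), pow_two]
          _ ≤ _ := quad_lower G i x
      have hq0 : 0 < x ⬝ᵥ x := by
        rcases lt_or_eq_of_le (Finset.sum_nonneg fun p _ => mul_self_nonneg (x p)) with hlt | heq
        · exact hlt
        · exact absurd (dotProduct_self_eq_zero.mp heq.symm) hx0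
      nlinarith
    exact le_antisymm (csInf_le bdd h1mem) (le_csInf ⟨1, h1mem⟩ hlb)
end

section
/- Let S_N be the star graph on N > 2 vertices with center vertex 1. If a leaf vertex j (j ≥ 2) is deleted, the grounded Laplacian L(j|j) has smallest eigenvalue (N − √(N²−4))/2. -/
open Matrix

/-- The star graph on `Fin N` with center `c`: `c` is adjacent to every other vertex and
there are no other edges. -/
def starGraph (N : ℕ) (c : Fin N) : SimpleGraph (Fin N) where
  Adj v w := v ≠ w ∧ (v = c ∨ w = c)
  symm := ⟨fun v w h => ⟨h.1.symm, h.2.symm⟩⟩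
  loopless := ⟨fun v h => h.1 rfl⟩

instance (N : ℕ) (c : Fin N) : DecidableRel (starGraph N c).Adj := fun v w =>
  inferInstanceAs (Decidable (v ≠ w ∧ (v = c ∨ w = c)))

lemma mem_spectrum_iff_matrix {n : Type*} [Fintype n] [DecidableEq n] (M : Matrix n n ℝ) (μ : ℝ) :
    μ ∈ spectrum ℝ M ↔ ∃ v : n → ℝ, v ≠ 0 ∧ M.mulVec v = μ • v := by
  rw [spectrum.mem_iff, Matrix.isUnit_iff_isUnit_det, isUnit_iff_ne_zero, not_not,
    ← Matrix.exists_mulVec_eq_zero_iff]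
  have key : ∀ v : n → ℝ, (algebraMap ℝ (Matrix n n ℝ) μ - M).mulVec v = μ • v - M.mulVec v := by
    intro v
    rw [sub_mulVec]
    congr 1
    ext i
    simp [Matrix.algebraMap_eq_diagonal, mulVec, dotProduct, diagonal, Finset.sum_ite_eq,
      Pi.algebraMap_apply, Algebra.algebraMap_self_apply]
  constructor
  · rintro ⟨v, hv, h⟩
    exact ⟨v, hv, by rw [key] at h; exact (sub_eq_zero.mp h).symm⟩
  · rintro ⟨v, hv, h⟩
    exact ⟨v, hv, by rw [key, h, sub_self]⟩

section Star
variable {N : ℕ} (c : Fin N)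

lemma star_neighborFinset_center : (starGraph N c).neighborFinset c = Finset.univ.erase c := by
  ext w
  simp only [SimpleGraph.mem_neighborFinset, Finset.mem_erase, Finset.mem_univ, and_true]
  exact ⟨fun h => Ne.symm h.1, fun h => ⟨Ne.symm h, Or.inl rfl⟩⟩

lemma star_neighborFinset_leaf {v : Fin N} (hv : v ≠ c) :
    (starGraph N c).neighborFinset v = {c} := by
  ext w
  simp only [SimpleGraph.mem_neighborFinset, Finset.mem_singleton]
  constructor
  · rintro ⟨h1, h2 | h2⟩
    · exact absurd h2 hv
    · exact h2
  · rintro rfl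
    exact ⟨hv, Or.inr rfl⟩

lemma star_degree_center : (starGraph N c).degree c = N - 1 := by
  rw [SimpleGraph.degree, star_neighborFinset_center, Finset.card_erase_of_mem (Finset.mem_univ c)]
  simp

lemma star_degree_leaf {v : Fin N} (hv : v ≠ c) : (starGraph N c).degree v = 1 := by
  rw [SimpleGraph.degree, star_neighborFinset_leaf c hv, Finset.card_singleton]

lemma lap_diag_center (hN : 2 < N) :
    ((starGraph N c).lapMatrix ℝ) c c = (N : ℝ) - 1 := by
  simp [SimpleGraph.lapMatrix, SimpleGraph.degMatrix, Matrix.sub_apply,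
    Matrix.diagonal_apply, SimpleGraph.adjMatrix_apply, (starGraph N c).loopless.irrefl c,
    star_degree_center, Nat.cast_sub (by omega : 1 ≤ N)]

lemma lap_diag_leaf {v : Fin N} (hv : v ≠ c) :
    ((starGraph N c).lapMatrix ℝ) v v = 1 := by
  simp [SimpleGraph.lapMatrix, SimpleGraph.degMatrix, Matrix.sub_apply,
    Matrix.diagonal_apply, SimpleGraph.adjMatrix_apply, (starGraph N c).loopless.irrefl v,
    star_degree_leaf c hv]

lemma lap_off {v w : Fin N} (hvw : v ≠ w) :
    ((starGraph N c).lapMatrix ℝ) v w = if v = c ∨ w = c then -1 else 0 := by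
  simp only [SimpleGraph.lapMatrix, SimpleGraph.degMatrix, Matrix.sub_apply,
    Matrix.diagonal_apply, SimpleGraph.adjMatrix_apply, if_neg hvw]
  by_cases h : v = c ∨ w = c
  · rw [if_pos ⟨hvw, h⟩, if_pos h]; ring
  · rw [if_neg (fun hadj => h hadj.2), if_neg h]; ring

end Star

theorem stmt11 {N : ℕ} (hN : 2 < N) (c j : Fin N) (hj : j ≠ c) :
    minEig (grounded ((starGraph N c).lapMatrix ℝ) {j}) =
      ((N : ℝ) - Real.sqrt ((N : ℝ) ^ 2 - 4)) / 2 := by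
  set lam : ℝ := ((N : ℝ) - Real.sqrt ((N : ℝ) ^ 2 - 4)) / 2 with hlam
  have hN3 : (3 : ℝ) ≤ (N : ℝ) := by exact_mod_cast hN
  have hsq : Real.sqrt ((N : ℝ) ^ 2 - 4) ^ 2 = (N : ℝ) ^ 2 - 4 := by
    rw [Real.sq_sqrt]; nlinarith
  have hlam_pos : 0 < lam := by
    rw [hlam]
    have : Real.sqrt ((N : ℝ) ^ 2 - 4) < (N : ℝ) := by
      nlinarith [Real.sqrt_nonneg ((N : ℝ) ^ 2 - 4)]
    linarith
  have hlam_lt : lam < 1 := by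
    rw [hlam]
    have : (N : ℝ) - 2 < Real.sqrt ((N : ℝ) ^ 2 - 4) := by
      nlinarith [Real.sqrt_nonneg ((N : ℝ) ^ 2 - 4)]
    linarith
  have hquad : lam ^ 2 - (N : ℝ) * lam + 1 = 0 := by
    rw [hlam]; field_simp; nlinarith
  have hc_mem : c ∉ ({j} : Finset (Fin N)) := by simp [hj.symm]
  set ι := {v : Fin N // v ∉ ({j} : Finset (Fin N))} with hι
  set c' : ι := ⟨c, hc_mem⟩ with hc'
  set L := (starGraph N c).lapMatrix ℝ with hL
  set M := grounded L ({j} : Finset (Fin N)) with hM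
  have ldc : L c c = (N : ℝ) - 1 := lap_diag_center c hN
  have ldl : ∀ v : Fin N, v ≠ c → L v v = 1 := fun v hv => lap_diag_leaf c hv
  have loff : ∀ v w : Fin N, v ≠ w → L v w = if v = c ∨ w = c then -1 else 0 :=
    fun v w hvw => lap_off c hvw
  have hcard : Fintype.card ι = N - 1 := by
    rw [Fintype.card_subtype]
    simp only [Finset.filter_not, Finset.filter_eq', Finset.filter_congr_decidable]
    rw [Finset.card_sdiff_of_subset (by simp), Finset.card_univ]
    simp
    rw [Finset.card_eq_one.mpr ⟨j, by ext; simp⟩]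
  have hcard_erase : ((Finset.univ.erase c').card : ℝ) = (N : ℝ) - 2 := by
    rw [Finset.card_erase_of_mem (Finset.mem_univ c'), Finset.card_univ, hcard]
    push_cast [Nat.cast_sub (by omega : 1 ≤ N - 1), Nat.cast_sub (by omega : 1 ≤ N)]
    ring
  have row_leaf : ∀ (x : ι → ℝ) (a : ι), a ≠ c' → (M *ᵥ x) a = x a - x c' := by
    intro x a ha
    have ha1 : a.1 ≠ c := fun h => ha (Subtype.ext h)
    have hrow : (M *ᵥ x) a = ∑ b : ι, M a b * x b := rfl
    have hsplit : ∀ b : ι, M a b * x b =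
        (if b = a then x a else 0) + (if b = c' then -x c' else 0) := by
      intro b
      have hMab : M a b = L a.1 b.1 := rfl
      by_cases hba : b = a
      · subst hba
        rw [hMab, ldl b.1 ha1, if_pos rfl, if_neg (fun h : b = c' => ha1 (congrArg Subtype.val h))]
        ring
      · have hab1 : a.1 ≠ b.1 := fun h => hba (Subtype.ext h.symm)
        rw [hMab, loff _ _ hab1, if_neg hba]
        by_cases hbc : b = c'
        · rw [if_pos hbc, if_pos (Or.inr (congrArg Subtype.val hbc)), hbc]
          ring
        · have hbc1 : b.1 ≠ c := fun h => hbc (Subtype.ext h)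
          rw [if_neg hbc, if_neg (by push_neg; exact ⟨ha1, hbc1⟩)]
          ring
    rw [hrow, Finset.sum_congr rfl (fun b _ => hsplit b), Finset.sum_add_distrib,
      Finset.sum_ite_eq' Finset.univ a (fun _ => x a),
      Finset.sum_ite_eq' Finset.univ c' (fun _ => -x c')]
    simp [sub_eq_add_neg]
  have row_center : ∀ (x : ι → ℝ),
      (M *ᵥ x) c' = ((N : ℝ) - 1) * x c' - ∑ b ∈ Finset.univ.erase c', x b := by
    intro x
    have hrow : (M *ᵥ x) c' = ∑ b : ι, M c' b * x b := rfl
    have hsplit : ∀ b : ι, M c' b * x b =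
        (if b = c' then ((N : ℝ) - 1) * x c' else 0) + (if b = c' then 0 else -x b) := by
      intro b
      have hMab : M c' b = L c b.1 := rfl
      by_cases hbc : b = c'
      · rw [hMab, hbc, if_pos rfl, if_pos rfl]
        show L c c * x c' = _
        rw [ldc]; ring
      · have hbc1 : b.1 ≠ c := fun h => hbc (Subtype.ext h)
        rw [hMab, loff _ _ (fun h => hbc1 h.symm), if_pos (Or.inl rfl), if_neg hbc, if_neg hbc]
        ring
    rw [hrow, Finset.sum_congr rfl (fun b _ => hsplit b), Finset.sum_add_distrib,
      Finset.sum_ite_eq' Finset.univ c' (fun _ => ((N : ℝ) - 1) * x c'),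
      if_pos (Finset.mem_univ c')]
    have h2 : ∑ b : ι, (if b = c' then 0 else -x b) = ∑ b ∈ Finset.univ.erase c', -x b := by
      rw [← Finset.sum_erase_add _ _ (Finset.mem_univ c'), if_pos rfl, add_zero]
      exact Finset.sum_congr rfl (fun b hb => by rw [if_neg (Finset.mem_erase.mp hb).1])
    rw [h2, Finset.sum_neg_distrib]
    ring
  -- membership: lam is an eigenvalue
  have hmem : lam ∈ spectrum ℝ M := by
    rw [mem_spectrum_iff_matrix]
    refine ⟨fun a => if a = c' then 1 - lam else 1, ?_, ?_⟩
    · intro h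
      have h2 : (1 : ℝ) - lam = 0 := by simpa using congrFun h c'
      linarith
    · funext a
      by_cases ha : a = c'
      · rw [ha, row_center, Pi.smul_apply, smul_eq_mul, if_pos rfl]
        have hsum : ∑ b ∈ Finset.univ.erase c', (if b = c' then 1 - lam else 1) = (N : ℝ) - 2 := by
          rw [Finset.sum_congr rfl (fun b hb => if_neg (Finset.mem_erase.mp hb).1),
            Finset.sum_const, nsmul_eq_mul, mul_one, hcard_erase]
        rw [hsum]
        linear_combination hquad
      · rw [row_leaf _ a ha, Pi.smul_apply, smul_eq_mul, if_neg ha, if_pos rfl]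
        ring
  -- lower bound
  have hlb : ∀ μ ∈ spectrum ℝ M, lam ≤ μ := by
    intro μ hμ
    rw [mem_spectrum_iff_matrix] at hμ
    obtain ⟨y, hy0, hMy⟩ := hμ
    have hMy' : ∀ a, (M *ᵥ y) a = μ * y a := fun a => by
      rw [hMy]; rfl
    set S := ∑ b ∈ Finset.univ.erase c', y b with hS
    set Q := ∑ b ∈ Finset.univ.erase c', (y b) ^ 2 with hQ
    set T := ∑ b : ι, (y b) ^ 2 with hT
    have hTsplit : T = (y c') ^ 2 + Q := by
      rw [hT, hQ, ← Finset.sum_erase_add _ _ (Finset.mem_univ c')]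
      ring
    have hTpos : 0 < T := by
      have : ∃ a, y a ≠ 0 := by
        by_contra h
        push_neg at h
        exact hy0 (funext h)
      obtain ⟨a, ha⟩ := this
      exact Finset.sum_pos' (fun b _ => sq_nonneg _)
        ⟨a, Finset.mem_univ a, by positivity⟩
    -- energy identity
    have hE : μ * T = ((N : ℝ) - 1) * (y c') ^ 2 - 2 * y c' * S + Q := by
      have e1 : ∑ a : ι, y a * (M *ᵥ y) a = μ * T := by
        rw [hT, Finset.mul_sum]
        exact Finset.sum_congr rfl (fun a _ => by rw [hMy' a]; ring)
      have e2 : ∑ a : ι, y a * (M *ᵥ y) a =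
          ((N : ℝ) - 1) * (y c') ^ 2 - 2 * y c' * S + Q := by
        have eleaf : ∑ a ∈ Finset.univ.erase c', y a * (M *ᵥ y) a
            = ∑ a ∈ Finset.univ.erase c', y a * (y a - y c') :=
          Finset.sum_congr rfl (fun a ha => by rw [row_leaf y a (Finset.mem_erase.mp ha).1])
        rw [← Finset.sum_erase_add _ _ (Finset.mem_univ c'), eleaf, row_center y]
        have : ∑ a ∈ Finset.univ.erase c', y a * (y a - y c') = Q - y c' * S := by
          rw [hQ, hS, Finset.mul_sum, ← Finset.sum_sub_distrib]
          exact Finset.sum_congr rfl (fun a _ => by ring)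
        rw [this, ← hS]
        ring
      rw [← e1, e2]
    -- the quadratic form bound
    have hkey : ((N : ℝ) - 1) * (y c') ^ 2 - 2 * y c' * S + Q - lam * T =
        ∑ a ∈ Finset.univ.erase c', (1 - lam) * (y a - y c' / (1 - lam)) ^ 2 := by
      have h1lam : (1 : ℝ) - lam ≠ 0 := by linarith
      have expand : ∀ a ∈ Finset.univ.erase c', (1 - lam) * (y a - y c' / (1 - lam)) ^ 2 =
          (1 - lam) * (y a) ^ 2 - 2 * y c' * y a + (y c') ^ 2 / (1 - lam) := by
        intro a _
        field_simp
        ring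
      rw [Finset.sum_congr rfl expand, Finset.sum_add_distrib, Finset.sum_sub_distrib,
        ← Finset.mul_sum, ← hQ, Finset.sum_const, nsmul_eq_mul, hcard_erase]
      have hmulS : ∑ a ∈ Finset.univ.erase c', 2 * y c' * y a = 2 * y c' * S := by
        rw [hS, Finset.mul_sum]
      rw [hmulS, hTsplit]
      field_simp
      linear_combination ((y c')^2) * hquad
    have hsum_nonneg : 0 ≤ ∑ a ∈ Finset.univ.erase c', (1 - lam) * (y a - y c' / (1 - lam)) ^ 2 :=
      Finset.sum_nonneg (fun a _ => mul_nonneg (by linarith) (sq_nonneg _))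
    have : lam * T ≤ μ * T := by
      rw [hE]
      linarith [hkey ▸ hsum_nonneg]
    exact le_of_mul_le_mul_right (by linarith [this]) hTpos
  have : IsLeast (spectrum ℝ M) lam := ⟨hmem, hlb⟩
  exact this.csInf_eq
end

section
/- Let A and B be real symmetric N×N matrices with eigenvalues ordered increasingly λ_1 ≤ ... ≤ λ_N. Then for each i and each 1 ≤ j ≤ i, λ_{i−j+1}(A) + λ_j(B) ≤ λ_i(A+B). -/
open Matrix

/-- `μ` is a monotone enumeration (with multiplicity) of the eigenvalues of the
Hermitian matrix `M`. -/
def SortedEigs {N : ℕ} {M : Matrix (Fin N) (Fin N) ℝ} (hM : M.IsHermitian)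
    (μ : Fin N → ℝ) : Prop :=
  Monotone μ ∧ ∃ σ : Equiv.Perm (Fin N), μ = hM.eigenvalues ∘ σ

open Matrix Finset

variable {N : ℕ}

-- coefficients vanish outside spanning set
lemma repr_zero_of_not_mem {M : Matrix (Fin N) (Fin N) ℝ} (hM : M.IsHermitian)
    (S : Set (Fin N)) {x : EuclideanSpace ℝ (Fin N)}
    (hx : x ∈ Submodule.span ℝ (hM.eigenvectorBasis '' S)) {k : Fin N} (hk : k ∉ S) :
    hM.eigenvectorBasis.repr x k = 0 := by
  rw [hM.eigenvectorBasis.repr_apply_apply]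
  induction hx using Submodule.span_induction with
  | mem y hy =>
      obtain ⟨l, hl, rfl⟩ := hy
      have : k ≠ l := fun h => hk (h ▸ hl)
      exact hM.eigenvectorBasis.orthonormal.2 this
  | zero => simp
  | add y z _ _ hy hz => rw [inner_add_right, hy, hz]; ring
  | smul r y _ hy => rw [inner_smul_right, hy]; ring

lemma inner_toEuclideanLin_eq_sum {M : Matrix (Fin N) (Fin N) ℝ} (hM : M.IsHermitian)
    (x : EuclideanSpace ℝ (Fin N)) :
    (inner ℝ x (Matrix.toEuclideanLin M x) : ℝ)
      = ∑ k, hM.eigenvalues k * (hM.eigenvectorBasis.repr x k)^2 := by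
  set e := hM.eigenvectorBasis
  have hsym : (Matrix.toEuclideanLin M).IsSymmetric :=
    Matrix.isHermitian_iff_isSymmetric.1 hM
  have h1 : ∀ k, e.repr (Matrix.toEuclideanLin M x) k
      = hM.eigenvalues k * e.repr x k := by
    intro k
    rw [e.repr_apply_apply, ← hsym (e k) x, e.repr_apply_apply]
    have : Matrix.toEuclideanLin M (e k) = hM.eigenvalues k • e k := by
      apply (WithLp.equiv 2 _).injective
      simp [Matrix.piLp_ofLp_toEuclideanLin]
      exact hM.mulVec_eigenvectorBasis k
    rw [this, inner_smul_left]
    simp [mul_comm]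
  calc (inner ℝ x (Matrix.toEuclideanLin M x) : ℝ)
      = (inner ℝ (e.repr x) (e.repr (Matrix.toEuclideanLin M x)) : ℝ) := (e.repr.inner_map_map _ _).symm
    _ = ∑ k, e.repr x k * e.repr (Matrix.toEuclideanLin M x) k := by
        rw [PiLp.inner_apply]; simp [mul_comm]
    _ = ∑ k, hM.eigenvalues k * (e.repr x k)^2 := by
        refine Finset.sum_congr rfl fun k _ => ?_
        rw [h1 k]; ring

lemma norm_sq_eq_sum' (e : OrthonormalBasis (Fin N) ℝ (EuclideanSpace ℝ (Fin N)))
    (x : EuclideanSpace ℝ (Fin N)) : ‖x‖^2 = ∑ k, (e.repr x k)^2 := by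
  rw [← real_inner_self_eq_norm_sq, ← e.repr.inner_map_map, PiLp.inner_apply]
  refine Finset.sum_congr rfl fun k _ => ?_
  simp [sq]

lemma quad_lower {M : Matrix (Fin N) (Fin N) ℝ} (hM : M.IsHermitian)
    (S : Set (Fin N)) {x : EuclideanSpace ℝ (Fin N)}
    (hx : x ∈ Submodule.span ℝ (hM.eigenvectorBasis '' S)) {r : ℝ}
    (hr : ∀ k ∈ S, r ≤ hM.eigenvalues k) :
    r * ‖x‖^2 ≤ (inner ℝ x (Matrix.toEuclideanLin M x) : ℝ) := by
  rw [inner_toEuclideanLin_eq_sum hM, norm_sq_eq_sum' hM.eigenvectorBasis, Finset.mul_sum]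
  refine Finset.sum_le_sum fun k _ => ?_
  by_cases hk : k ∈ S
  · exact mul_le_mul_of_nonneg_right (hr k hk) (sq_nonneg _)
  · rw [repr_zero_of_not_mem hM S hx hk]; simp

lemma quad_upper {M : Matrix (Fin N) (Fin N) ℝ} (hM : M.IsHermitian)
    (S : Set (Fin N)) {x : EuclideanSpace ℝ (Fin N)}
    (hx : x ∈ Submodule.span ℝ (hM.eigenvectorBasis '' S)) {r : ℝ}
    (hr : ∀ k ∈ S, hM.eigenvalues k ≤ r) :
    (inner ℝ x (Matrix.toEuclideanLin M x) : ℝ) ≤ r * ‖x‖^2 := by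
  rw [inner_toEuclideanLin_eq_sum hM, norm_sq_eq_sum' hM.eigenvectorBasis, Finset.mul_sum]
  refine Finset.sum_le_sum fun k _ => ?_
  by_cases hk : k ∈ S
  · exact mul_le_mul_of_nonneg_right (hr k hk) (sq_nonneg _)
  · rw [repr_zero_of_not_mem hM S hx hk]; simp

lemma finrank_span_onb (e : OrthonormalBasis (Fin N) ℝ (EuclideanSpace ℝ (Fin N)))
    (F : Finset (Fin N)) :
    Module.finrank ℝ (Submodule.span ℝ (e '' (F : Set (Fin N)))) = F.card := by
  have hli : LinearIndependent ℝ (fun k : (F : Set (Fin N)) => e k) :=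
    e.orthonormal.linearIndependent.comp Subtype.val Subtype.val_injective
  have himg : Set.range (fun k : (F : Set (Fin N)) => e k) = e '' (F : Set (Fin N)) := by
    rw [← Set.image_eq_range]
  rw [← himg, finrank_span_eq_card hli]
  simp

lemma finrank_inf_ge (U V : Submodule ℝ (EuclideanSpace ℝ (Fin N))) :
    Module.finrank ℝ U + Module.finrank ℝ V
      ≤ N + Module.finrank ℝ (U ⊓ V : Submodule ℝ (EuclideanSpace ℝ (Fin N))) := by
  have h := Submodule.finrank_sup_add_finrank_inf_eq U V
  have h2 : Module.finrank ℝ (U ⊔ V : Submodule ℝ (EuclideanSpace ℝ (Fin N))) ≤ N := by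
    simpa using Submodule.finrank_le (U ⊔ V)
  omega

open Matrix in
theorem stmt14' {N : ℕ} (A B : Matrix (Fin N) (Fin N) ℝ)
    (hA : A.IsHermitian) (hB : B.IsHermitian) (hAB : (A + B).IsHermitian)
    (a b c : Fin N → ℝ)
    (ha : Monotone a ∧ ∃ σ : Equiv.Perm (Fin N), a = hA.eigenvalues ∘ σ)
    (hb : Monotone b ∧ ∃ σ : Equiv.Perm (Fin N), b = hB.eigenvalues ∘ σ)
    (hc : Monotone c ∧ ∃ σ : Equiv.Perm (Fin N), c = hAB.eigenvalues ∘ σ)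
    (i j : ℕ) (hji : j ≤ i) (hi : i < N) :
    a ⟨i - j, Nat.lt_of_le_of_lt (Nat.sub_le i j) hi⟩ + b ⟨j, Nat.lt_of_le_of_lt hji hi⟩ ≤ c ⟨i, hi⟩ := by
  obtain ⟨hma, σA, hsa⟩ := ha
  obtain ⟨hmb, σB, hsb⟩ := hb
  obtain ⟨hmc, σC, hsc⟩ := hc
  set iA : Fin N := ⟨i - j, Nat.lt_of_le_of_lt (Nat.sub_le i j) hi⟩
  set iB : Fin N := ⟨j, Nat.lt_of_le_of_lt hji hi⟩
  set iC : Fin N := ⟨i, hi⟩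
  set FA : Finset (Fin N) := (Finset.Ici iA).image σA with hFA
  set FB : Finset (Fin N) := (Finset.Ici iB).image σB with hFB
  set FC : Finset (Fin N) := (Finset.Iic iC).image σC with hFC
  set VA := Submodule.span ℝ (hA.eigenvectorBasis '' (FA : Set (Fin N))) with hVA
  set VB := Submodule.span ℝ (hB.eigenvectorBasis '' (FB : Set (Fin N))) with hVB
  set VC := Submodule.span ℝ (hAB.eigenvectorBasis '' (FC : Set (Fin N))) with hVC
  have hdA : Module.finrank ℝ VA = N - (i - j) := by
    rw [hVA, finrank_span_onb, hFA, Finset.card_image_of_injective _ σA.injective,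
      Fin.card_Ici]
  have hdB : Module.finrank ℝ VB = N - j := by
    rw [hVB, finrank_span_onb, hFB, Finset.card_image_of_injective _ σB.injective,
      Fin.card_Ici]
  have hdC : Module.finrank ℝ VC = i + 1 := by
    rw [hVC, finrank_span_onb, hFC, Finset.card_image_of_injective _ σC.injective,
      Fin.card_Iic]
  have hrank : 0 < Module.finrank ℝ ((VA ⊓ VB ⊓ VC : Submodule ℝ (EuclideanSpace ℝ (Fin N)))) := by
    have h1 := finrank_inf_ge VA VB
    have h2 := finrank_inf_ge (VA ⊓ VB) VC
    omega
  have hne : (VA ⊓ VB ⊓ VC : Submodule ℝ (EuclideanSpace ℝ (Fin N))) ≠ ⊥ := by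
    intro h; rw [h] at hrank; simp at hrank
  obtain ⟨x, hx, hx0⟩ := Submodule.exists_mem_ne_zero_of_ne_bot hne
  obtain ⟨⟨hxA, hxB⟩, hxC⟩ := hx
  have hnorm : (0:ℝ) < ‖x‖^2 := by have := norm_pos_iff.mpr hx0; positivity
  -- eigenvalue bounds on the index sets
  have hbA : ∀ k ∈ (FA : Set (Fin N)), a iA ≤ hA.eigenvalues k := by
    intro k hk
    obtain ⟨m, hm, rfl⟩ := Finset.mem_image.1 hk
    have : hA.eigenvalues (σA m) = a m := by rw [hsa]; rfl
    rw [this]; exact hma (Finset.mem_Ici.1 hm)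
  have hbB : ∀ k ∈ (FB : Set (Fin N)), b iB ≤ hB.eigenvalues k := by
    intro k hk
    obtain ⟨m, hm, rfl⟩ := Finset.mem_image.1 hk
    have : hB.eigenvalues (σB m) = b m := by rw [hsb]; rfl
    rw [this]; exact hmb (Finset.mem_Ici.1 hm)
  have hbC : ∀ k ∈ (FC : Set (Fin N)), hAB.eigenvalues k ≤ c iC := by
    intro k hk
    obtain ⟨m, hm, rfl⟩ := Finset.mem_image.1 hk
    have : hAB.eigenvalues (σC m) = c m := by rw [hsc]; rfl
    rw [this]; exact hmc (Finset.mem_Iic.1 hm)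
  have h1 := quad_lower hA _ hxA hbA
  have h2 := quad_lower hB _ hxB hbB
  have h3 := quad_upper hAB _ hxC hbC
  have hadd : (inner ℝ x (Matrix.toEuclideanLin (A + B) x) : ℝ)
      = inner ℝ x (Matrix.toEuclideanLin A x) + inner ℝ x (Matrix.toEuclideanLin B x) := by
    rw [map_add]
    simp [inner_add_right]
  have : (a iA + b iB) * ‖x‖^2 ≤ c iC * ‖x‖^2 := by
    calc (a iA + b iB) * ‖x‖^2 = a iA * ‖x‖^2 + b iB * ‖x‖^2 := by ring
      _ ≤ (inner ℝ x (Matrix.toEuclideanLin (A + B) x) : ℝ) := by rw [hadd]; exact add_le_add h1 h2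
      _ ≤ c iC * ‖x‖^2 := h3
  exact le_of_mul_le_mul_right this hnorm


/-- Weyl's inequality (lower bound form), with eigenvalues indexed in nondecreasing
order starting from `0`:  `λ_{i-j}(A) + λ_j(B) ≤ λ_i(A+B)` for `j ≤ i`. -/
theorem stmt14 {N : ℕ} (A B : Matrix (Fin N) (Fin N) ℝ)
    (hA : A.IsHermitian) (hB : B.IsHermitian) (hAB : (A + B).IsHermitian)
    (a b c : Fin N → ℝ)
    (ha : SortedEigs hA a) (hb : SortedEigs hB b) (hc : SortedEigs hAB c)
    (i j : ℕ) (hji : j ≤ i) (hi : i < N) :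
    a ⟨i - j, by omega⟩ + b ⟨j, by omega⟩ ≤ c ⟨i, hi⟩ := by
  exact stmt14' A B hA hB hAB a b c ha hb hc i j hji hi
end

section
/- Let U be a real n×m matrix with U^T U = I_m and A a real symmetric n×n matrix with eigenvalues λ_1 ≤ ... ≤ λ_n (increasing order). Let B = U^T A U with eigenvalues μ_1 ≤ ... ≤ μ_m. Then for each i = 1,...,m, λ_i ≤ μ_i ≤ λ_{n−m+i}. -/
open Matrix

local notation "⟪" x ", " y "⟫" => @inner ℝ _ _ x y

lemma my_inner_eq_dot {k : ℕ} (x y : EuclideanSpace ℝ (Fin k)) :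
    ⟪x, y⟫ = (x : Fin k → ℝ) ⬝ᵥ (y : Fin k → ℝ) := by
  simp [PiLp.inner_apply, dotProduct, mul_comm]

section quad
variable {N : ℕ} {M : Matrix (Fin N) (Fin N) ℝ} (hM : M.IsHermitian)

lemma my_coeff_zero (t : Finset (Fin N)) (x : EuclideanSpace ℝ (Fin N))
    (hx : x ∈ Submodule.span ℝ (⇑hM.eigenvectorBasis '' ↑t)) {j : Fin N} (hj : j ∉ t) :
    ⟪hM.eigenvectorBasis j, x⟫ = 0 := by
  induction hx using Submodule.span_induction with
  | mem y hy =>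
    obtain ⟨k, hk, rfl⟩ := hy
    exact hM.eigenvectorBasis.orthonormal.2 (fun h => hj (h ▸ hk))
  | zero => simp
  | add y z _ _ hy hz => rw [inner_add_right, hy, hz, add_zero]
  | smul a y _ hy => rw [inner_smul_right, hy, mul_zero]

lemma my_symm_dot (hM : M.IsHermitian) (v x : Fin N → ℝ) : v ⬝ᵥ (M *ᵥ x) = (M *ᵥ v) ⬝ᵥ x := by
  have hMT : Mᵀ = M := hM
  rw [Matrix.dotProduct_mulVec, ← hMT, Matrix.mulVec_transpose, hMT]

lemma my_quad_repr (x : EuclideanSpace ℝ (Fin N)) :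
    ⟪x, (WithLp.toLp 2 (M *ᵥ x) : EuclideanSpace ℝ (Fin N))⟫
      = ∑ j, hM.eigenvalues j * ⟪x, hM.eigenvectorBasis j⟫ ^ 2 := by
  rw [← hM.eigenvectorBasis.sum_inner_mul_inner x]
  refine Finset.sum_congr rfl fun j _ => ?_
  have h1 : ⟪(hM.eigenvectorBasis j : EuclideanSpace ℝ (Fin N)),
      (WithLp.toLp 2 (M *ᵥ x) : EuclideanSpace ℝ (Fin N))⟫
      = hM.eigenvalues j * ⟪hM.eigenvectorBasis j, x⟫ := by
    rw [my_inner_eq_dot, my_symm_dot hM]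
    calc (M *ᵥ (hM.eigenvectorBasis j : Fin N → ℝ)) ⬝ᵥ (x : Fin N → ℝ)
        = (hM.eigenvalues j • (hM.eigenvectorBasis j : Fin N → ℝ)) ⬝ᵥ (x : Fin N → ℝ) :=
          congrArg (· ⬝ᵥ (x : Fin N → ℝ)) (hM.mulVec_eigenvectorBasis j)
      _ = hM.eigenvalues j * ((hM.eigenvectorBasis j : Fin N → ℝ) ⬝ᵥ (x : Fin N → ℝ)) :=
          smul_dotProduct _ _ _
      _ = hM.eigenvalues j * ⟪hM.eigenvectorBasis j, x⟫ := by rw [← my_inner_eq_dot]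
  rw [h1, real_inner_comm (hM.eigenvectorBasis j) x]
  ring

lemma my_norm_repr (x : EuclideanSpace ℝ (Fin N)) :
    ‖x‖ ^ 2 = ∑ j, ⟪x, hM.eigenvectorBasis j⟫ ^ 2 := by
  rw [← real_inner_self_eq_norm_sq, ← hM.eigenvectorBasis.sum_inner_mul_inner x x]
  refine Finset.sum_congr rfl fun j _ => ?_
  rw [real_inner_comm (hM.eigenvectorBasis j) x, sq]

lemma my_quad_le (c : ℝ) (t : Finset (Fin N)) (ht : ∀ j ∈ t, hM.eigenvalues j ≤ c)
    (x : EuclideanSpace ℝ (Fin N))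
    (hx : x ∈ Submodule.span ℝ (⇑hM.eigenvectorBasis '' ↑t)) :
    ⟪x, (WithLp.toLp 2 (M *ᵥ x) : EuclideanSpace ℝ (Fin N))⟫ ≤ c * ‖x‖ ^ 2 := by
  have hz : ∀ j ∈ Finset.univ, j ∉ t → ⟪x, hM.eigenvectorBasis j⟫ ^ 2 = 0 := by
    intro j _ hj
    rw [real_inner_comm, my_coeff_zero hM t x hx hj]
    ring
  have e1 : ∑ j ∈ t, hM.eigenvalues j * ⟪x, hM.eigenvectorBasis j⟫ ^ 2
      = ∑ j, hM.eigenvalues j * ⟪x, hM.eigenvectorBasis j⟫ ^ 2 :=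
    Finset.sum_subset t.subset_univ (fun j h1 h2 => by rw [hz j h1 h2]; ring)
  have e2 : ∑ j ∈ t, ⟪x, hM.eigenvectorBasis j⟫ ^ 2
      = ∑ j, ⟪x, hM.eigenvectorBasis j⟫ ^ 2 :=
    Finset.sum_subset t.subset_univ hz
  rw [my_quad_repr hM x, my_norm_repr hM x, ← e1, ← e2, Finset.mul_sum]
  exact Finset.sum_le_sum fun j hj =>
    mul_le_mul_of_nonneg_right (ht j hj) (sq_nonneg _)

lemma my_le_quad (c : ℝ) (t : Finset (Fin N)) (ht : ∀ j ∈ t, c ≤ hM.eigenvalues j)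
    (x : EuclideanSpace ℝ (Fin N))
    (hx : x ∈ Submodule.span ℝ (⇑hM.eigenvectorBasis '' ↑t)) :
    c * ‖x‖ ^ 2 ≤ ⟪x, (WithLp.toLp 2 (M *ᵥ x) : EuclideanSpace ℝ (Fin N))⟫ := by
  have hz : ∀ j ∈ Finset.univ, j ∉ t → ⟪x, hM.eigenvectorBasis j⟫ ^ 2 = 0 := by
    intro j _ hj
    rw [real_inner_comm, my_coeff_zero hM t x hx hj]
    ring
  have e1 : ∑ j ∈ t, hM.eigenvalues j * ⟪x, hM.eigenvectorBasis j⟫ ^ 2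
      = ∑ j, hM.eigenvalues j * ⟪x, hM.eigenvectorBasis j⟫ ^ 2 :=
    Finset.sum_subset t.subset_univ (fun j h1 h2 => by rw [hz j h1 h2]; ring)
  have e2 : ∑ j ∈ t, ⟪x, hM.eigenvectorBasis j⟫ ^ 2
      = ∑ j, ⟪x, hM.eigenvectorBasis j⟫ ^ 2 :=
    Finset.sum_subset t.subset_univ hz
  rw [my_quad_repr hM x, my_norm_repr hM x, ← e1, ← e2, Finset.mul_sum]
  exact Finset.sum_le_sum fun j hj =>
    mul_le_mul_of_nonneg_right (ht j hj) (sq_nonneg _)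

end quad

lemma my_exists_inter {k : ℕ} (V W : Submodule ℝ (EuclideanSpace ℝ (Fin k)))
    (h : k < Module.finrank ℝ V + Module.finrank ℝ W) : ∃ x ∈ V ⊓ W, x ≠ 0 := by
  have h1 := Submodule.finrank_sup_add_finrank_inf_eq V W
  have h2 : Module.finrank ℝ ↥(V ⊔ W) ≤ k := by
    simpa [finrank_euclideanSpace] using Submodule.finrank_le (V ⊔ W)
  have h3 : 0 < Module.finrank ℝ ↥(V ⊓ W) := by omega
  refine Submodule.exists_mem_ne_zero_of_ne_bot fun hb => ?_
  rw [hb, finrank_bot] at h3; omega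

lemma my_finrank_span {k : ℕ} {E : Type*} [AddCommGroup E] [Module ℝ E]
    (f : Fin k → E) (hf : LinearIndependent ℝ f) (t : Finset (Fin k)) :
    Module.finrank ℝ (Submodule.span ℝ (f '' ↑t)) = t.card := by
  have li : LinearIndependent ℝ (fun j : ↥(↑t : Set (Fin k)) => f j) :=
    hf.comp _ Subtype.val_injective
  rw [Set.image_eq_range, finrank_span_eq_card li]
  simp


lemma my_dot_UU {n m : ℕ} (U : Matrix (Fin n) (Fin m) ℝ) (hU : Uᵀ * U = 1) (y : Fin m → ℝ) :
    (U *ᵥ y) ⬝ᵥ (U *ᵥ y) = y ⬝ᵥ y := by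
  rw [Matrix.dotProduct_mulVec, ← Matrix.mulVec_transpose, Matrix.mulVec_mulVec, hU,
    Matrix.one_mulVec]

lemma my_transfer {n m : ℕ} (U : Matrix (Fin n) (Fin m) ℝ) (A : Matrix (Fin n) (Fin n) ℝ)
    (y : Fin m → ℝ) :
    (U *ᵥ y) ⬝ᵥ (A *ᵥ (U *ᵥ y)) = y ⬝ᵥ ((Uᵀ * A * U) *ᵥ y) := by
  rw [Matrix.mul_assoc, ← Matrix.mulVec_mulVec, Matrix.dotProduct_mulVec y,
    ← Matrix.mulVec_transpose Uᵀ, Matrix.transpose_transpose, ← Matrix.mulVec_mulVec]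

lemma my_exists_pair {n m : ℕ} (U : Matrix (Fin n) (Fin m) ℝ) (hU : Uᵀ * U = 1)
    (bA : OrthonormalBasis (Fin n) ℝ (EuclideanSpace ℝ (Fin n)))
    (bB : OrthonormalBasis (Fin m) ℝ (EuclideanSpace ℝ (Fin m)))
    (tA : Finset (Fin n)) (tB : Finset (Fin m)) (hcard : n < tA.card + tB.card) :
    ∃ y : EuclideanSpace ℝ (Fin m), y ≠ 0 ∧ y ∈ Submodule.span ℝ (⇑bB '' ↑tB) ∧
      (WithLp.toLp 2 (U *ᵥ y) : EuclideanSpace ℝ (Fin n)) ∈ Submodule.span ℝ (⇑bA '' ↑tA) := by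
  set Ulin : EuclideanSpace ℝ (Fin m) →ₗ[ℝ] EuclideanSpace ℝ (Fin n) := Matrix.toEuclideanLin U with hUlin
  have hinj : LinearMap.ker Ulin = ⊥ := by
    rw [LinearMap.ker_eq_bot']
    intro v hv
    have h0 : (Uᵀ * U) *ᵥ v = 0 := by
      rw [← Matrix.mulVec_mulVec]
      have : U *ᵥ v = 0 := by rw [hUlin] at hv; simpa using congrArg WithLp.ofLp hv
      rw [this, Matrix.mulVec_zero]
    simpa [hU] using h0
  set S : Submodule ℝ (EuclideanSpace ℝ (Fin m)) := Submodule.span ℝ (⇑bB '' ↑tB) with hS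
  set T : Submodule ℝ (EuclideanSpace ℝ (Fin n)) := Submodule.span ℝ (⇑bA '' ↑tA) with hT
  have hfT : Module.finrank ℝ T = tA.card :=
    my_finrank_span _ bA.orthonormal.linearIndependent tA
  have hfS' : Module.finrank ℝ (S.map Ulin) = tB.card := by
    rw [hS, Submodule.map_span, ← Set.image_comp]
    exact my_finrank_span _ ((bB.orthonormal.linearIndependent).map' Ulin hinj) tB
  obtain ⟨x, hx, hx0⟩ := my_exists_inter T (S.map Ulin) (by rw [hfT, hfS']; exact hcard)
  obtain ⟨y, hyS, hxy⟩ := hx.2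
  refine ⟨y, fun h => hx0 (by rw [← hxy, h, map_zero]), hyS, ?_⟩
  have : Ulin y = WithLp.toLp 2 (U *ᵥ y) := rfl
  rw [← this, hxy]
  exact hx.1

lemma my_core {n m : ℕ} (U : Matrix (Fin n) (Fin m) ℝ) (hU : Uᵀ * U = 1)
    (A : Matrix (Fin n) (Fin n) ℝ) (hA : A.IsHermitian) (hB : (Uᵀ * A * U).IsHermitian)
    (c d : ℝ) (tA : Finset (Fin n)) (tB : Finset (Fin m))
    (hcard : n < tA.card + tB.card)
    (hA' : ∀ j ∈ tA, c ≤ hA.eigenvalues j)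
    (hB' : ∀ j ∈ tB, hB.eigenvalues j ≤ d) : c ≤ d := by
  obtain ⟨y, hy0, hyS, hxT⟩ :=
    my_exists_pair U hU hA.eigenvectorBasis hB.eigenvectorBasis tA tB hcard
  set x : EuclideanSpace ℝ (Fin n) := (WithLp.toLp 2 (U *ᵥ y) : EuclideanSpace ℝ (Fin n)) with hx
  have hnx : ‖x‖ ^ 2 = ‖y‖ ^ 2 := by
    rw [← real_inner_self_eq_norm_sq, ← real_inner_self_eq_norm_sq,
      my_inner_eq_dot, my_inner_eq_dot]
    exact my_dot_UU U hU y
  have hq : ⟪x, (WithLp.toLp 2 (A *ᵥ x) : EuclideanSpace ℝ (Fin n))⟫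
      = ⟪y, (WithLp.toLp 2 ((Uᵀ * A * U) *ᵥ y) : EuclideanSpace ℝ (Fin m))⟫ := by
    rw [my_inner_eq_dot, my_inner_eq_dot]
    exact my_transfer U A y
  have h1 := my_le_quad hA c tA hA' x hxT
  have h2 := my_quad_le hB d tB hB' y hyS
  have hy2 : 0 < ‖y‖ ^ 2 := by
    have : ‖y‖ ≠ 0 := fun h => hy0 (norm_eq_zero.mp h)
    positivity
  rw [hnx] at h1
  rw [hq] at h1
  exact le_of_mul_le_mul_right (h1.trans h2) hy2

lemma my_core' {n m : ℕ} (U : Matrix (Fin n) (Fin m) ℝ) (hU : Uᵀ * U = 1)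
    (A : Matrix (Fin n) (Fin n) ℝ) (hA : A.IsHermitian) (hB : (Uᵀ * A * U).IsHermitian)
    (c d : ℝ) (tA : Finset (Fin n)) (tB : Finset (Fin m))
    (hcard : n < tA.card + tB.card)
    (hA' : ∀ j ∈ tA, hA.eigenvalues j ≤ c)
    (hB' : ∀ j ∈ tB, d ≤ hB.eigenvalues j) : d ≤ c := by
  obtain ⟨y, hy0, hyS, hxT⟩ :=
    my_exists_pair U hU hA.eigenvectorBasis hB.eigenvectorBasis tA tB hcard
  set x : EuclideanSpace ℝ (Fin n) := (WithLp.toLp 2 (U *ᵥ y) : EuclideanSpace ℝ (Fin n)) with hx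
  have hnx : ‖x‖ ^ 2 = ‖y‖ ^ 2 := by
    rw [← real_inner_self_eq_norm_sq, ← real_inner_self_eq_norm_sq,
      my_inner_eq_dot, my_inner_eq_dot]
    exact my_dot_UU U hU y
  have hq : ⟪x, (WithLp.toLp 2 (A *ᵥ x) : EuclideanSpace ℝ (Fin n))⟫
      = ⟪y, (WithLp.toLp 2 ((Uᵀ * A * U) *ᵥ y) : EuclideanSpace ℝ (Fin m))⟫ := by
    rw [my_inner_eq_dot, my_inner_eq_dot]
    exact my_transfer U A y
  have h1 := my_quad_le hA c tA hA' x hxT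
  have h2 := my_le_quad hB d tB hB' y hyS
  have hy2 : 0 < ‖y‖ ^ 2 := by
    have : ‖y‖ ≠ 0 := fun h => hy0 (norm_eq_zero.mp h)
    positivity
  rw [hnx] at h1
  rw [hq] at h1
  exact le_of_mul_le_mul_right (h2.trans h1) hy2


/-- Cauchy interlacing (Poincaré separation) theorem: with eigenvalues indexed in
nondecreasing order starting from `0`, `λ_i ≤ μ_i ≤ λ_{n-m+i}`. -/
theorem stmt19 {n m : ℕ} (hmn : m ≤ n)
    (U : Matrix (Fin n) (Fin m) ℝ) (hU : Uᵀ * U = 1)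
    (A : Matrix (Fin n) (Fin n) ℝ) (hA : A.IsHermitian)
    (hB : (Uᵀ * A * U).IsHermitian)
    (lam : Fin n → ℝ) (mu : Fin m → ℝ)
    (hlam : SortedEigs hA lam) (hmu : SortedEigs hB mu)
    (i : Fin m) :
    lam ⟨i.1, by omega⟩ ≤ mu i ∧ mu i ≤ lam ⟨n - m + i.1, by omega⟩ := by
  obtain ⟨hlm, σA, hσA⟩ := hlam
  obtain ⟨hmm, σB, hσB⟩ := hmu
  have him : (i : ℕ) < m := i.2
  constructor
  · refine my_core U hU A hA hB _ _ ((Finset.Ici (⟨i.1, by omega⟩ : Fin n)).image σA)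
      ((Finset.Iic i).image σB) ?_ ?_ ?_
    · rw [Finset.card_image_of_injective _ σA.injective,
        Finset.card_image_of_injective _ σB.injective, Fin.card_Ici, Fin.card_Iic,
        Fin.val_mk]
      omega
    · intro j hj
      obtain ⟨j', hj', rfl⟩ := Finset.mem_image.mp hj
      have h : hA.eigenvalues (σA j') = lam j' := by rw [hσA]; rfl
      rw [h]
      exact hlm (Finset.mem_Ici.mp hj')
    · intro j hj
      obtain ⟨j', hj', rfl⟩ := Finset.mem_image.mp hj
      have h : hB.eigenvalues (σB j') = mu j' := by rw [hσB]; rfl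
      rw [h]
      exact hmm (Finset.mem_Iic.mp hj')
  · refine my_core' U hU A hA hB _ _ ((Finset.Iic (⟨n - m + i.1, by omega⟩ : Fin n)).image σA)
      ((Finset.Ici i).image σB) ?_ ?_ ?_
    · rw [Finset.card_image_of_injective _ σA.injective,
        Finset.card_image_of_injective _ σB.injective, Fin.card_Iic, Fin.card_Ici,
        Fin.val_mk]
      omega
    · intro j hj
      obtain ⟨j', hj', rfl⟩ := Finset.mem_image.mp hj
      have h : hA.eigenvalues (σA j') = lam j' := by rw [hσA]; rfl
      rw [h]
      exact hlm (Finset.mem_Iic.mp hj')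
    · intro j hj
      obtain ⟨j', hj', rfl⟩ := Finset.mem_image.mp hj
      have h : hB.eigenvalues (σB j') = mu j' := by rw [hσB]; rfl
      rw [h]
      exact hmm (Finset.mem_Ici.mp hj')
end
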